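/- If the initial density f(·,0) is bounded by M(0), then the solution of the bounded confidence kinetic PDE satisfies the a priori bound M(t) ≤ e^{(2/w + 2/(1-w))t}·(M(0) + 4) - 4, where M(t) = sup_x |f(x,t)|; more precisely, any nonnegative f with ∫_0^1 f(x,t)dx = 1 satisfies the gain-term bound (2/w)·∫ f(y,t)·f((x-(1-w)y)/w, t) dy ≤ (2/w + 2/(1-w))·(M(t) + 4) for all x. -/

import Mathlib

open MeasureTheory Real intervalIntegral

lemma qmp_affine (a b : ℝ) (ha : a ≠ 0) :
    Measure.QuasiMeasurePreserving (fun y : ℝ => a * y + b) volume volume := by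
  have h1 : Measure.QuasiMeasurePreserving (fun y : ℝ => a * y) volume volume := by
    refine ⟨(measurable_id.const_mul a), ?_⟩
    rw [show (fun y : ℝ => a * y) = (a * ·) from rfl, Real.map_volume_mul_left ha]
    exact Measure.smul_absolutelyContinuous
  have h2 : Measure.QuasiMeasurePreserving (fun y : ℝ => y + b) volume volume :=
    (measurePreserving_add_right volume b).quasiMeasurePreserving
  exact h2.comp h1

section pieces
variable (f : ℝ → ℝ → ℝ)
  (hnonneg : ∀ x t, 0 ≤ f x t)
  (hzero : ∀ x t, x ∉ Set.Icc (0:ℝ) 1 → f x t = 0)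
  (hmass : ∀ t, ∫ x in (0:ℝ)..1, f x t = 1)

include hnonneg hzero hmass

lemma f_integrable (t : ℝ) : Integrable (fun x => f x t) := by
  have hII : IntervalIntegrable (fun x => f x t) volume 0 1 := by
    by_contra h
    have h0 := intervalIntegral.integral_undef h
    rw [hmass t] at h0; norm_num at h0
  have heq : (fun x => f x t) = Set.indicator (Set.Icc (0:ℝ) 1) (fun x => f x t) := by
    funext x
    by_cases hx : x ∈ Set.Icc (0:ℝ) 1
    · simp [hx]
    · simp [hx, hzero x t hx]
  rw [heq, integrable_indicator_iff measurableSet_Icc]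
  exact (integrableOn_Icc_iff_integrableOn_Ioc enorm_ne_top).2 hII.1

lemma f_total (t : ℝ) : ∫ x, f x t = 1 := by
  have heq : (fun x => f x t) = Set.indicator (Set.Icc (0:ℝ) 1) (fun x => f x t) := by
    funext x
    by_cases hx : x ∈ Set.Icc (0:ℝ) 1
    · simp [hx]
    · simp [hx, hzero x t hx]
  calc ∫ x, f x t = ∫ x, Set.indicator (Set.Icc (0:ℝ) 1) (fun x => f x t) x := by rw [← heq]
    _ = ∫ x in Set.Icc (0:ℝ) 1, f x t := integral_indicator measurableSet_Icc
    _ = ∫ x in Set.Ioc (0:ℝ) 1, f x t := integral_Icc_eq_integral_Ioc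
    _ = ∫ x in (0:ℝ)..1, f x t := (intervalIntegral.integral_of_le zero_le_one).symm
    _ = 1 := hmass t

lemma f_int_le_one {a b : ℝ} (hab : a ≤ b) (t : ℝ) : (∫ y in a..b, f y t) ≤ 1 := by
  rw [intervalIntegral.integral_of_le hab]
  calc (∫ y in Set.Ioc a b, f y t) ≤ ∫ y, f y t :=
        setIntegral_le_integral (f_integrable f hnonneg hzero hmass t)
          (Filter.Eventually.of_forall (fun y => hnonneg y t))
    _ = 1 := f_total f hnonneg hzero hmass t

end pieces

section pieces2
variable (f : ℝ → ℝ → ℝ)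
  (hnonneg : ∀ x t, 0 ≤ f x t)
  (hzero : ∀ x t, x ∉ Set.Icc (0:ℝ) 1 → f x t = 0)
  (hmass : ∀ t, ∫ x in (0:ℝ)..1, f x t = 1)
  (M : ℝ → ℝ)
  (hM : ∀ t, M t = ⨆ x, f x t)
  (hbdd : ∀ t, BddAbove (Set.range fun x => f x t))

include hnonneg hM hbdd

lemma f_le_M (x t : ℝ) : f x t ≤ M t := by
  rw [hM t]; exact le_ciSup (hbdd t) x

lemma M_nonneg (t : ℝ) : 0 ≤ M t :=
  (hnonneg 0 t).trans (f_le_M f hnonneg M hM hbdd 0 t)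

include hzero hmass

lemma gain_int_le {w : ℝ} (hw : w ∈ Set.Ioo (0:ℝ) 1) (x t a b : ℝ) (hab : a ≤ b) :
    (∫ y in a..b, f ((x - (1 - w) * y) / w) t * f y t) ≤ M t := by
  obtain ⟨hw0, hw1⟩ := hw
  have h1w : (0:ℝ) < 1 - w := by linarith
  have hInt := f_integrable f hnonneg hzero hmass t
  -- measurability of the composed function
  have hslope : (-(1 - w) / w) ≠ 0 := by
    apply div_ne_zero <;> intro h <;> nlinarith
  have hcompeq : (fun y => f ((x - (1 - w) * y) / w) t)
      = (fun u => f u t) ∘ (fun y : ℝ => (-(1 - w) / w) * y + x / w) := by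
    funext y
    simp only [Function.comp_apply]
    congr 1
    field_simp
    ring
  have haesm0 : AEStronglyMeasurable (fun y => f ((x - (1 - w) * y) / w) t) volume := by
    rw [hcompeq]
    exact hInt.aestronglyMeasurable.comp_quasiMeasurePreserving
      (qmp_affine _ _ hslope)
  have haesm : AEStronglyMeasurable (fun y => f ((x - (1 - w) * y) / w) t * f y t)
      (volume.restrict (Set.uIoc a b)) :=
    (haesm0.restrict).mul (hInt.aestronglyMeasurable.restrict)
  have hgII : IntervalIntegrable (fun y => M t * f y t) volume a b :=
    (hInt.intervalIntegrable).const_mul _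
  have hprodII : IntervalIntegrable (fun y => f ((x - (1 - w) * y) / w) t * f y t) volume a b := by
    apply hgII.mono_fun' haesm
    apply Filter.Eventually.of_forall
    intro y
    have h1 : 0 ≤ f ((x - (1 - w) * y) / w) t * f y t :=
      mul_nonneg (hnonneg _ _) (hnonneg _ _)
    show ‖f ((x - (1 - w) * y) / w) t * f y t‖ ≤ M t * f y t
    rw [Real.norm_eq_abs, abs_of_nonneg h1]
    exact mul_le_mul_of_nonneg_right (f_le_M f hnonneg M hM hbdd _ t) (hnonneg y t)
  calc (∫ y in a..b, f ((x - (1 - w) * y) / w) t * f y t)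
      ≤ ∫ y in a..b, M t * f y t := by
        apply intervalIntegral.integral_mono_on hab hprodII hgII
        intro y _
        exact mul_le_mul_of_nonneg_right (f_le_M f hnonneg M hM hbdd _ t) (hnonneg y t)
    _ = M t * ∫ y in a..b, f y t := intervalIntegral.integral_const_mul _ _
    _ ≤ M t * 1 := mul_le_mul_of_nonneg_left
        (f_int_le_one f hnonneg hzero hmass hab t) (M_nonneg f hnonneg M hM hbdd t)
    _ = M t := mul_one _

end pieces2

section pieces3
variable (w Δ : ℝ) (f : ℝ → ℝ → ℝ) (M : ℝ → ℝ)
  (hw : w ∈ Set.Ioo (0:ℝ) 1) (hΔ : Δ ∈ Set.Ioc (0:ℝ) 1)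
  (hnonneg : ∀ x t, 0 ≤ f x t)
  (hzero : ∀ x t, x ∉ Set.Icc (0:ℝ) 1 → f x t = 0)
  (hmass : ∀ t, ∫ x in (0:ℝ)..1, f x t = 1)
  (hM : ∀ t, M t = ⨆ x, f x t)
  (hbdd : ∀ t, BddAbove (Set.range fun x => f x t))
  (hpde : ∀ x t, HasDerivAt (fun s => f x s)
    ((2 / w) * (∫ y in (x - Δ * w)..(x + Δ * w), f ((x - (1 - w) * y) / w) t * f y t)
      - 2 * f x t * ∫ y in (x - Δ)..(x + Δ), f y t) t)

include hw hΔ hnonneg hzero hmass hM hbdd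

lemma deriv_le (x t : ℝ) :
    (2 / w) * (∫ y in (x - Δ * w)..(x + Δ * w), f ((x - (1 - w) * y) / w) t * f y t)
      - 2 * f x t * ∫ y in (x - Δ)..(x + Δ), f y t ≤ (2 / w) * M t := by
  obtain ⟨hw0, hw1⟩ := hw
  obtain ⟨hΔ0, hΔ1⟩ := hΔ
  have hab : x - Δ * w ≤ x + Δ * w := by nlinarith
  have hab2 : x - Δ ≤ x + Δ := by linarith
  have h1 := gain_int_le f hnonneg hzero hmass M hM hbdd ⟨hw0, hw1⟩ x t _ _ hab
  have h2 : 0 ≤ ∫ y in (x - Δ)..(x + Δ), f y t :=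
    intervalIntegral.integral_nonneg hab2 (fun u _ => hnonneg u t)
  have h3 : 0 ≤ 2 / w := by positivity
  nlinarith [hnonneg x t]

lemma deriv_ge (x t : ℝ) :
    -(2 * f x t) ≤
    (2 / w) * (∫ y in (x - Δ * w)..(x + Δ * w), f ((x - (1 - w) * y) / w) t * f y t)
      - 2 * f x t * ∫ y in (x - Δ)..(x + Δ), f y t := by
  obtain ⟨hw0, hw1⟩ := hw
  obtain ⟨hΔ0, hΔ1⟩ := hΔ
  have hab : x - Δ * w ≤ x + Δ * w := by nlinarith
  have hab2 : x - Δ ≤ x + Δ := by linarith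
  have h1 : 0 ≤ ∫ y in (x - Δ * w)..(x + Δ * w), f ((x - (1 - w) * y) / w) t * f y t :=
    intervalIntegral.integral_nonneg hab (fun u _ => mul_nonneg (hnonneg _ _) (hnonneg _ _))
  have h2 : (∫ y in (x - Δ)..(x + Δ), f y t) ≤ 1 := f_int_le_one f hnonneg hzero hmass hab2 t
  have h3 : 0 ≤ ∫ y in (x - Δ)..(x + Δ), f y t :=
    intervalIntegral.integral_nonneg hab2 (fun u _ => hnonneg u t)
  have h4 : 0 ≤ 2 / w := by positivity
  nlinarith [hnonneg x t]

include hpde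

lemma M_back {t s : ℝ} (hts : t ≤ s) : M t ≤ exp (2 * (s - t)) * M s := by
  rw [hM t]
  apply ciSup_le
  intro x
  have hmono : Monotone (fun r => f x r * exp (2 * r)) := by
    have hv : ∀ r : ℝ, HasDerivAt (fun r => f x r * exp (2 * r))
        (((2 / w) * (∫ y in (x - Δ * w)..(x + Δ * w), f ((x - (1 - w) * y) / w) r * f y r)
          - 2 * f x r * ∫ y in (x - Δ)..(x + Δ), f y r) * exp (2 * r)
          + f x r * (exp (2 * r) * 2)) r := by
      intro r
      have he : HasDerivAt (fun r : ℝ => exp (2 * r)) (exp (2 * r) * 2) r := by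
        simpa using (((hasDerivAt_id r).const_mul 2).exp)
      exact (hpde x r).mul he
    apply monotone_of_deriv_nonneg (fun r => (hv r).differentiableAt)
    intro r
    rw [(hv r).deriv]
    have hge := deriv_ge w Δ f M hw hΔ hnonneg hzero hmass hM hbdd x r
    nlinarith [exp_pos (2 * r), hnonneg x r]
  have h1 := hmono hts
  have h2 : f x s * exp (2 * s) ≤ M s * exp (2 * s) :=
    mul_le_mul_of_nonneg_right (f_le_M f hnonneg M hM hbdd x s) (exp_pos _).le
  have h3 : f x t * exp (2 * t) ≤ M s * exp (2 * s) := le_trans h1 h2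
  have h4 : f x t ≤ M s * exp (2 * s) / exp (2 * t) := by
    rw [le_div_iff₀ (exp_pos _)]; exact h3
  calc f x t ≤ M s * exp (2 * s) / exp (2 * t) := h4
    _ = exp (2 * (s - t)) * M s := by
        rw [show 2 * (s - t) = 2 * s - 2 * t by ring, exp_sub]; ring

lemma M_fwd {t s B : ℝ} (hts : t ≤ s) (hB : ∀ r ∈ Set.Icc t s, M r ≤ B) :
    M s ≤ M t + (2 / w + 2 / (1 - w)) * (B + 4) * (s - t) := by
  obtain ⟨hw0, hw1⟩ := hw
  have h1w : (0:ℝ) < 1 - w := by linarith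
  have hB0 : 0 ≤ B := le_trans (M_nonneg f hnonneg M hM hbdd t) (hB t ⟨le_refl t, hts⟩)
  rw [hM s]
  apply ciSup_le
  intro x
  set C : ℝ := (2 / w + 2 / (1 - w)) * (B + 4) with hC
  have hC0 : 0 ≤ C := by positivity
  have hg : ∀ r : ℝ, HasDerivAt (fun r => C * r - f x r)
      (C - ((2 / w) * (∫ y in (x - Δ * w)..(x + Δ * w), f ((x - (1 - w) * y) / w) r * f y r)
        - 2 * f x r * ∫ y in (x - Δ)..(x + Δ), f y r)) r :=
    fun r => by
      have h := ((hasDerivAt_id r).const_mul C).sub (hpde x r)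
      simp only [id_eq, mul_one] at h
      exact h
  have hmono : MonotoneOn (fun r => C * r - f x r) (Set.Icc t s) := by
    apply monotoneOn_of_deriv_nonneg (convex_Icc t s)
    · exact Continuous.continuousOn (by
        have : Differentiable ℝ (fun r => C * r - f x r) := fun r => (hg r).differentiableAt
        exact this.continuous)
    · exact fun r _ => ((hg r).differentiableAt).differentiableWithinAt
    · intro r hr
      rw [interior_Icc] at hr
      rw [(hg r).deriv]
      have hle := deriv_le w Δ f M ⟨hw0, hw1⟩ hΔ hnonneg hzero hmass hM hbdd x r
      have hMr : M r ≤ B := hB r ⟨hr.1.le, hr.2.le⟩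
      have hMr0 : 0 ≤ M r := M_nonneg f hnonneg M hM hbdd r
      have h2w : 0 < 2 / w := by positivity
      have h2w' : 0 < 2 / (1 - w) := by positivity
      have : (2 / w) * M r ≤ C := by
        rw [hC]; nlinarith
      linarith
  have := hmono (Set.left_mem_Icc.2 hts) (Set.right_mem_Icc.2 hts) hts
  have hfle := f_le_M f hnonneg M hM hbdd x t
  simp only at this
  linarith

end pieces3

set_option maxHeartbeats 1000000

theorem density_apriori_bound (w Δ : ℝ) (hw : w ∈ Set.Ioo (0:ℝ) 1)
    (hΔ : Δ ∈ Set.Ioc (0:ℝ) 1)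
    (f : ℝ → ℝ → ℝ)
    (hnonneg : ∀ x t, 0 ≤ f x t)
    (hzero : ∀ x t, x ∉ Set.Icc (0:ℝ) 1 → f x t = 0)
    (hmass : ∀ t, ∫ x in (0:ℝ)..1, f x t = 1)
    (M : ℝ → ℝ)
    (hM : ∀ t, M t = ⨆ x, f x t)
    (hbdd : ∀ t, BddAbove (Set.range fun x => f x t))
    (hpde : ∀ x t, HasDerivAt (fun s => f x s)
      ((2 / w) * (∫ y in (x - Δ * w)..(x + Δ * w), f ((x - (1 - w) * y) / w) t * f y t)
        - 2 * f x t * ∫ y in (x - Δ)..(x + Δ), f y t) t) :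
    (∀ t : ℝ, 0 ≤ t →
        M t ≤ exp ((2 / w + 2 / (1 - w)) * t) * (M 0 + 4) - 4) ∧
      (∀ x t : ℝ,
        (2 / w) * (∫ y in (x - Δ * w)..(x + Δ * w), f ((x - (1 - w) * y) / w) t * f y t)
          ≤ (2 / w + 2 / (1 - w)) * (M t + 4)) := by
  obtain ⟨hw0, hw1⟩ := hw
  have h1w : (0:ℝ) < 1 - w := by linarith
  have h2w : 0 < 2 / w := by positivity
  have h2w' : 0 < 2 / (1 - w) := by positivity
  have hc : 0 < 2 / w + 2 / (1 - w) := by linarith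
  set c : ℝ := 2 / w + 2 / (1 - w) with hcdef
  constructor
  · -- main Grönwall bound
    intro T ht
    rcases eq_or_lt_of_le ht with h | hT
    · rw [← h]
      have : exp (c * 0) = 1 := by rw [mul_zero, exp_zero]
      rw [this]; linarith
    -- T > 0: work on [0, T]
    set B : ℝ := exp (2 * T) * M T with hBdef
    have hBb : ∀ r ∈ Set.Icc (0:ℝ) T, M r ≤ B := by
      intro r hr
      calc M r ≤ exp (2 * (T - r)) * M T :=
            M_back w Δ f M ⟨hw0, hw1⟩ hΔ hnonneg hzero hmass hM hbdd hpde hr.2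
        _ ≤ exp (2 * T) * M T := by
            apply mul_le_mul_of_nonneg_right _ (M_nonneg f hnonneg M hM hbdd T)
            exact exp_le_exp.2 (by linarith [hr.1])
    have hB0 : 0 ≤ B := le_trans (M_nonneg f hnonneg M hM hbdd 0) (hBb 0 ⟨le_refl _, hT.le⟩)
    set L : ℝ := c * (B + 4) with hLdef
    have hL0 : 0 ≤ L := by positivity
    -- forward local bound with constant L
    have hup : ∀ a b : ℝ, a ∈ Set.Icc (0:ℝ) T → b ∈ Set.Icc (0:ℝ) T → a ≤ b →
        M b ≤ M a + L * (b - a) := by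
      intro a b ha hb hab
      have h0 := M_fwd w Δ f M ⟨hw0, hw1⟩ hΔ hnonneg hzero hmass hM hbdd hpde hab
        (fun r hr => hBb r ⟨le_trans ha.1 hr.1, le_trans hr.2 hb.2⟩)
      calc M b ≤ M a + c * (B + 4) * (b - a) := h0
        _ = M a + L * (b - a) := by rw [hLdef]
    -- backward local bound
    have hdown : ∀ a b : ℝ, a ∈ Set.Icc (0:ℝ) T → b ∈ Set.Icc (0:ℝ) T → a ≤ b →
        M a ≤ M b + (2 * exp (2 * T) * B) * (b - a) := by
      intro a b ha hb hab
      have h1 : M a ≤ exp (2 * (b - a)) * M b :=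
        M_back w Δ f M ⟨hw0, hw1⟩ hΔ hnonneg hzero hmass hM hbdd hpde hab
      have hh0 : (0:ℝ) ≤ 2 * (b - a) := by linarith
      have h2 : exp (2 * (b - a)) - 1 ≤ 2 * (b - a) * exp (2 * (b - a)) := by
        have h3' : (1 - 2 * (b - a)) * exp (2 * (b - a)) ≤ 1 := by
          have h3 := Real.add_one_le_exp (-(2 * (b - a)))
          rw [Real.exp_neg] at h3
          have h4 := mul_le_mul_of_nonneg_right
            (by linarith : 1 - 2 * (b - a) ≤ (exp (2 * (b - a)))⁻¹) (exp_pos (2 * (b - a))).le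
          rwa [inv_mul_cancel₀ (ne_of_gt (exp_pos _))] at h4
        nlinarith
      have h5 : exp (2 * (b - a)) ≤ exp (2 * T) := exp_le_exp.2 (by
        have := ha.1; have := hb.2; linarith)
      have h6 : M b ≤ B := hBb b hb
      have h7 : 0 ≤ M b := M_nonneg f hnonneg M hM hbdd b
      have hint1 := mul_le_mul_of_nonneg_left h6
        (sub_nonneg.2 (one_le_exp hh0))
      have hint2 := mul_le_mul_of_nonneg_right h2 hB0
      have hint3 := mul_le_mul_of_nonneg_right
        (mul_le_mul_of_nonneg_left h5 hh0) hB0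
      nlinarith [h1, hint1, hint2, hint3]
    -- continuity of M on [0, T]
    have hcont : ContinuousOn M (Set.Icc 0 T) := by
      have hK0 : (0:ℝ) ≤ L + 2 * exp (2 * T) * B := by positivity
      have hlip : LipschitzOnWith (Real.toNNReal (L + 2 * exp (2 * T) * B)) M
          (Set.Icc 0 T) := by
        apply LipschitzOnWith.of_dist_le_mul
        intro a ha b hb
        rw [Real.dist_eq, Real.dist_eq, Real.coe_toNNReal _ hK0]
        rcases le_total a b with hab | hab
        · rw [abs_of_nonpos (by linarith : a - b ≤ 0)]
          have u1 := hup a b ha hb hab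
          have u2 := hdown a b ha hb hab
          have n1 : 0 ≤ L * (b - a) := mul_nonneg hL0 (by linarith)
          have n2 : 0 ≤ (2 * exp (2 * T) * B) * (b - a) :=
            mul_nonneg (by positivity) (by linarith)
          rw [abs_le]
          constructor <;> nlinarith
        · rw [abs_of_nonneg (by linarith : 0 ≤ a - b)]
          have u1 := hup b a hb ha hab
          have u2 := hdown b a hb ha hab
          have n1 : 0 ≤ L * (a - b) := mul_nonneg hL0 (by linarith)
          have n2 : 0 ≤ (2 * exp (2 * T) * B) * (a - b) :=
            mul_nonneg (by positivity) (by linarith)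
          rw [abs_le]
          constructor <;> nlinarith
      exact hlip.continuousOn
    -- liminf slope condition
    have hslopecond : ∀ x ∈ Set.Ico (0:ℝ) T, ∀ r : ℝ, c * M x + 4 * c < r →
        ∃ᶠ z in nhdsWithin x (Set.Ioi x), (z - x)⁻¹ * (M z - M x) < r := by
      intro x hx r hr
      have hd0 : 0 < r - (c * M x + 4 * c) := by linarith
      set d : ℝ := r - (c * M x + 4 * c) with hddef
      have hcL : 0 ≤ c * L := by positivity
      have hη1 : 0 < T - x := by linarith [hx.2]
      have hη2 : 0 < d / (c * L + 1) := div_pos hd0 (by positivity)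
      set η : ℝ := min (T - x) (d / (c * L + 1)) with hηdef
      have hη0 : 0 < η := lt_min hη1 hη2
      apply Filter.Eventually.frequently
      filter_upwards [Ioo_mem_nhdsGT_of_mem (show x ∈ Set.Ico x (x + η) from Set.mem_Ico.2 ⟨le_refl x, by linarith⟩)]
      intro z hz
      obtain ⟨hz1, hz2⟩ := hz
      have hzx : 0 < z - x := by linarith
      have hzT : z ∈ Set.Icc (0:ℝ) T := by
        constructor
        · linarith [hx.1]
        · have : η ≤ T - x := min_le_left _ _
          linarith
      have hxT : x ∈ Set.Icc (0:ℝ) T := ⟨hx.1, hx.2.le⟩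
      have hBz : ∀ u ∈ Set.Icc x z, M u ≤ M x + L * (z - x) := by
        intro u hu
        have huT : u ∈ Set.Icc (0:ℝ) T := ⟨le_trans hx.1 hu.1, le_trans hu.2 hzT.2⟩
        have h0 := hup x u hxT huT hu.1
        nlinarith [hu.2, hL0]
      have hMz := M_fwd w Δ f M ⟨hw0, hw1⟩ hΔ hnonneg hzero hmass hM hbdd hpde hz1.le hBz
      rw [← hcdef] at hMz
      have hslope : (z - x)⁻¹ * (M z - M x) ≤ c * (M x + L * (z - x) + 4) := by
        rw [inv_mul_le_iff₀ hzx]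
        nlinarith [hMz]
      have h9 : z - x < d / (c * L + 1) := by
        have : η ≤ d / (c * L + 1) := min_le_right _ _
        linarith
      have h8 : c * L * (z - x) < d := by
        rw [lt_div_iff₀ (by positivity : (0:ℝ) < c * L + 1)] at h9
        nlinarith [hcL, hzx]
      have hfin : c * (M x + L * (z - x) + 4) < r := by nlinarith [h8]
      exact lt_of_le_of_lt hslope hfin
    -- Grönwall
    have hgron := le_gronwallBound_of_liminf_deriv_right_le (f := M)
      (f' := fun r => c * M r + 4 * c) (δ := M 0) (K := c) (ε := 4 * c) (a := 0) (b := T)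
      hcont hslopecond le_rfl (fun r _ => le_refl _)
    have hTt := hgron T (Set.right_mem_Icc.2 hT.le)
    rw [gronwallBound_of_K_ne_0 (ne_of_gt hc)] at hTt
    simp only [sub_zero] at hTt
    have h44 : 4 * c / c = 4 := by field_simp
    rw [h44] at hTt
    have hring : exp (c * T) * (M 0 + 4) - 4 = M 0 * exp (c * T) + 4 * (exp (c * T) - 1) := by
      ring
    rw [hring]
    linarith
  · -- gain bound
    intro x t
    obtain ⟨hΔ0, hΔ1⟩ := hΔ
    have hab : x - Δ * w ≤ x + Δ * w := by nlinarith
    have h1 := gain_int_le f hnonneg hzero hmass M hM hbdd ⟨hw0, hw1⟩ x t _ _ hab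
    have hM0 := M_nonneg f hnonneg M hM hbdd t
    nlinarith
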